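/- Adjoint computation for the zero-range generator: for the inhomogeneous product measure $\nu = \nu_{u(\cdot)} = \prod_x \nu_{u(x)}$ with zero-range marginals, the adjoint of the zero-range generator $L_{ZR}$ applied to the constant function $1$ satisfies $L_{ZR}^{*,\nu} 1(\eta) = \sum_{x\in\mathbb{T}^d_N} \frac{N^{-2}(\Delta^N\varphi)(u(x))}{\varphi(u(x))}\,\big(g(\eta_x) - \varphi(u(x))\big)$. -/

import Mathlib

/-- The `i`-th unit vector in the discrete torus `(ℤ/Nℤ)^d`. -/
def unitVec (N d : ℕ) (i : Fin d) : Fin d → ZMod N := fun j => if j = i then 1 else 0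

/-- The discrete Laplacian `Δ^N v(x) = N² ∑ᵢ (v(x+eᵢ) + v(x-eᵢ) - 2 v(x))`. -/
noncomputable def discLap (N d : ℕ) (v : (Fin d → ZMod N) → ℝ) (x : Fin d → ZMod N) : ℝ :=
  (N : ℝ) ^ 2 * ∑ i : Fin d, (v (x + unitVec N d i) + v (x - unitVec N d i) - 2 * v x)

/-- Particle configurations on the discrete torus. -/
def Config (N d : ℕ) : Type := (Fin d → ZMod N) → ℕ

/-- `moveCfg η x y` is `η^{x,y}`: one particle at `x` jumps to `y`. -/
noncomputable def moveCfg {N d : ℕ} (η : Config N d) (x y : Fin d → ZMod N) : Config N d :=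
  Function.update (Function.update η x (η x - 1)) y (Function.update η x (η x - 1) y + 1)

/-- The zero-range generator
`L_{ZR} F(η) = ∑ₓ ∑_{|e|=1} g(ηₓ) (F(η^{x,x+e}) - F(η))`. -/
noncomputable def LZR (N d : ℕ) [NeZero N] (g : ℕ → ℝ)
    (F : Config N d → ℝ) (η : Config N d) : ℝ :=
  ∑ x : Fin d → ZMod N, ∑ i : Fin d,
    (g (η x) * (F (moveCfg η x (x + unitVec N d i)) - F η)
      + g (η x) * (F (moveCfg η x (x - unitVec N d i)) - F η))

section Aux

variable {N d : ℕ}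

lemma moveCfg_apply_src (η : Config N d) {x y : Fin d → ZMod N} (hxy : x ≠ y) :
    moveCfg η x y x = η x - 1 := by
  simp [moveCfg, Function.update, hxy, Ne.symm hxy]

lemma moveCfg_apply_tgt (η : Config N d) {x y : Fin d → ZMod N} (hxy : x ≠ y) :
    moveCfg η x y y = η y + 1 := by
  simp [moveCfg, Function.update, hxy, Ne.symm hxy]

lemma moveCfg_apply_other (η : Config N d) {x y z : Fin d → ZMod N} (hzx : z ≠ x) (hzy : z ≠ y) :
    moveCfg η x y z = η z := by
  simp [moveCfg, Function.update, hzx, hzy]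

lemma moveCfg_same (η : Config N d) {x : Fin d → ZMod N} (h : 1 ≤ η x) : moveCfg η x x = η := by
  funext z
  by_cases hz : z = x
  · subst hz; show Function.update _ z _ z = _; rw [Function.update_self, show Function.update η z (η z - 1) z = η z - 1 by simp [Function.update]]
    omega
  · simp [moveCfg, Function.update, hz]

lemma moveCfg_moveCfg (η : Config N d) {x y : Fin d → ZMod N} (hxy : x ≠ y) (h : 1 ≤ η x) :
    moveCfg (moveCfg η x y) y x = η := by
  funext z
  by_cases hzx : z = x
  · subst hzx
    rw [moveCfg_apply_tgt _ (Ne.symm hxy), moveCfg_apply_src η hxy]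
    omega
  · by_cases hzy : z = y
    · subst hzy
      rw [moveCfg_apply_src _ (Ne.symm hxy), moveCfg_apply_tgt η hxy]; omega
    · rw [moveCfg_apply_other _ hzy hzx, moveCfg_apply_other _ hzx hzy]

variable [NeZero N]

lemma nu_split (q : (Fin d → ZMod N) → ℕ → ℝ) {x y : Fin d → ZMod N} (hxy : x ≠ y)
    (w : Config N d) :
    ∏ z : Fin d → ZMod N, q z (w z)
      = q x (w x) * (q y (w y) * ∏ z ∈ (Finset.univ.erase x).erase y, q z (w z)) := by
  rw [Finset.mul_prod_erase (Finset.univ.erase x) (fun z => q z (w z))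
      (Finset.mem_erase.mpr ⟨Ne.symm hxy, Finset.mem_univ y⟩),
    Finset.mul_prod_erase Finset.univ (fun z => q z (w z)) (Finset.mem_univ x)]

lemma key_id (g : ℕ → ℝ) (φ : ℝ → ℝ) (u : (Fin d → ZMod N) → ℝ) (p : ℝ → ℕ → ℝ)
    (hratio : ∀ x k, g (k + 1) * p (u x) (k + 1) = φ (u x) * p (u x) k)
    (ν : Config N d → ℝ) (hν : ∀ η, ν η = ∏ x : Fin d → ZMod N, p (u x) (η x))
    (F : Config N d → ℝ)
    {x y : Fin d → ZMod N} (hxy : x ≠ y) (ζ : Config N d) (hζ : 1 ≤ ζ y) :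
    φ (u y) * (g ((moveCfg ζ y x) x) * F (moveCfg (moveCfg ζ y x) x y) * ν (moveCfg ζ y x))
      = φ (u x) * (g (ζ y) * F ζ * ν ζ) := by
  have hback : moveCfg (moveCfg ζ y x) x y = ζ := moveCfg_moveCfg ζ (Ne.symm hxy) hζ
  have hx : (moveCfg ζ y x) x = ζ x + 1 := moveCfg_apply_tgt ζ (Ne.symm hxy)
  have hy : (moveCfg ζ y x) y = ζ y - 1 := moveCfg_apply_src ζ (Ne.symm hxy)
  obtain ⟨k, hk⟩ : ∃ k, ζ y = k + 1 := ⟨ζ y - 1, by omega⟩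
  have hRν : ν (moveCfg ζ y x)
      = p (u x) (ζ x + 1) * (p (u y) k *
        ∏ z ∈ (Finset.univ.erase x).erase y, p (u z) (ζ z)) := by
    rw [hν, nu_split (fun z m => p (u z) m) hxy, hx, hy, hk, Nat.add_sub_cancel]
    congr 1
    congr 1
    exact Finset.prod_congr rfl fun z hz => by
      rw [moveCfg_apply_other ζ (Finset.mem_erase.mp hz).1
        (Finset.mem_erase.mp (Finset.mem_erase.mp hz).2).1]
  have hRζ : ν ζ
      = p (u x) (ζ x) * (p (u y) (k + 1) *
        ∏ z ∈ (Finset.univ.erase x).erase y, p (u z) (ζ z)) := by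
    rw [hν, nu_split (fun z m => p (u z) m) hxy, hk]
  rw [hback, hx, hRν, hRζ, hk]
  have h1 := hratio x (ζ x)
  have h2 := hratio y k
  set R := ∏ z ∈ (Finset.univ.erase x).erase y, p (u z) (ζ z) with hR
  linear_combination (φ (u y) * F ζ * (p (u y) k * R)) * h1
    - (φ (u x) * F ζ * (p (u x) (ζ x) * R)) * h2

lemma CV (g : ℕ → ℝ) (φ : ℝ → ℝ) (u : (Fin d → ZMod N) → ℝ) (p : ℝ → ℕ → ℝ)
    (hg0 : ∀ k, g k = 0 ↔ k = 0)
    (hratio : ∀ x k, g (k + 1) * p (u x) (k + 1) = φ (u x) * p (u x) k)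
    (ν : Config N d → ℝ) (hν : ∀ η, ν η = ∏ x : Fin d → ZMod N, p (u x) (η x))
    (F : Config N d → ℝ) (x y : Fin d → ZMod N) :
    ∑' η : Config N d, φ (u y) * (g (η x) * F (moveCfg η x y) * ν η)
      = ∑' ζ : Config N d, φ (u x) * (g (ζ y) * F ζ * ν ζ) := by
  by_cases hxy : x = y
  · subst hxy
    refine tsum_congr fun η => ?_
    by_cases hη : η x = 0
    · rw [(hg0 _).mpr hη]; ring
    · rw [moveCfg_same η (by omega)]
  · set f : Config N d → ℝ := fun η => φ (u y) * (g (η x) * F (moveCfg η x y) * ν η) with hf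
    set h : Config N d → ℝ := fun ζ => φ (u x) * (g (ζ y) * F ζ * ν ζ) with hh
    have hsupp : ∀ ζ ∈ Function.support h, 1 ≤ ζ y := by
      intro ζ hζ
      rcases Nat.eq_zero_or_pos (ζ y) with h0 | h1
      · exact absurd (by simp [hh, (hg0 _).mpr h0]) hζ
      · exact h1
    refine tsum_eq_tsum_of_ne_zero_bij (fun ζ => moveCfg ζ.1 y x) ?_ ?_ ?_
    · rintro ⟨ζ1, hζ1⟩ ⟨ζ2, hζ2⟩ hmv
      simp only [Subtype.mk.injEq]
      have e1 := moveCfg_moveCfg ζ1 (Ne.symm hxy) (hsupp _ hζ1)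
      have e2 := moveCfg_moveCfg ζ2 (Ne.symm hxy) (hsupp _ hζ2)
      have hmv' : moveCfg ζ1 y x = moveCfg ζ2 y x := hmv
      rw [← e1, ← e2, hmv']
    · intro η hη
      have hηx : 1 ≤ η x := by
        rcases Nat.eq_zero_or_pos (η x) with h0 | h1
        · exact absurd (by simp [hf, (hg0 _).mpr h0]) hη
        · exact h1
      have hback : moveCfg (moveCfg η x y) y x = η := moveCfg_moveCfg η hxy hηx
      have hζy : 1 ≤ (moveCfg η x y) y := by rw [moveCfg_apply_tgt η hxy]; omega
      have hval : f (moveCfg (moveCfg η x y) y x) = h (moveCfg η x y) :=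
        key_id g φ u p hratio ν hν F hxy (moveCfg η x y) hζy
      have hmem : moveCfg η x y ∈ Function.support h := by
        intro h0
        rw [← hval, hback] at h0
        exact hη h0
      exact ⟨⟨moveCfg η x y, hmem⟩, hback⟩
    · rintro ⟨ζ, hζ⟩
      exact key_id g φ u p hratio ν hν F hxy ζ (hsupp _ hζ)

end Aux

/-- Adjoint computation for the zero-range generator: with respect to the inhomogeneous
product measure `ν = ∏ₓ ν_{u(x)}`, one has
`L_{ZR}^{*,ν} 1(η) = ∑ₓ N⁻²(Δ^N φ)(u(x))/φ(u(x)) · (g(ηₓ) - φ(u(x)))`,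
i.e. `∫ L_{ZR} F dν = ∫ G F dν` for all suitable test functions `F`. -/
theorem stmt7 (N d : ℕ) [NeZero N] (g : ℕ → ℝ) (φ : ℝ → ℝ)
    (hg0 : ∀ k, g k = 0 ↔ k = 0) (hgnonneg : ∀ k, 0 ≤ g k)
    (u : (Fin d → ZMod N) → ℝ) (hupos : ∀ x, 0 < u x)
    (hφpos : ∀ x, 0 < φ (u x))
    (p : ℝ → ℕ → ℝ)
    (hpnonneg : ∀ ρ k, 0 ≤ p ρ k)
    (hpnorm : ∀ x, ∑' k : ℕ, p (u x) k = 1)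
    (hratio : ∀ x k, g (k + 1) * p (u x) (k + 1) = φ (u x) * p (u x) k)
    (ν : Config N d → ℝ)
    (hν : ∀ η, ν η = ∏ x : Fin d → ZMod N, p (u x) (η x))
    (F : Config N d → ℝ) (M : ℝ) (hF : ∀ η, |F η| ≤ M)
    (hsumrate : Summable (fun η : Config N d => (∑ x : Fin d → ZMod N, g (η x)) * ν η))
    (hsum1 : Summable (fun η : Config N d => LZR N d g F η * ν η))
    (hsum2 : Summable (fun η : Config N d =>
      (∑ x : Fin d → ZMod N,
        discLap N d (fun y => φ (u y)) x / ((N : ℝ) ^ 2 * φ (u x)) *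
          (g (η x) - φ (u x))) * F η * ν η)) :
    ∑' η : Config N d, LZR N d g F η * ν η =
      ∑' η : Config N d,
        (∑ x : Fin d → ZMod N,
          discLap N d (fun y => φ (u y)) x / ((N : ℝ) ^ 2 * φ (u x)) *
            (g (η x) - φ (u x))) * F η * ν η := by
  classical
  set e : Fin d → (Fin d → ZMod N) := fun i => unitVec N d i with he
  have hν0 : ∀ η, 0 ≤ ν η := fun η => by
    rw [hν]; exact Finset.prod_nonneg fun z _ => hpnonneg _ _
  have hM : 0 ≤ M := le_trans (abs_nonneg _) (hF (fun _ => 0))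
  -- summability of the basic pieces
  have S1 : ∀ x : Fin d → ZMod N, Summable (fun η : Config N d => g (η x) * ν η) := by
    intro x
    refine hsumrate.of_nonneg_of_le (fun η => mul_nonneg (hgnonneg _) (hν0 η)) (fun η => ?_)
    exact mul_le_mul_of_nonneg_right
      (Finset.single_le_sum (fun z _ => hgnonneg (η z)) (Finset.mem_univ x)) (hν0 η)
  have S2 : ∀ (x : Fin d → ZMod N) (G : Config N d → Config N d),
      Summable (fun η : Config N d => g (η x) * F (G η) * ν η) := by
    intro x G
    refine Summable.of_abs ?_
    refine ((S1 x).mul_left M).of_nonneg_of_le (fun η => abs_nonneg _) (fun η => ?_)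
    rw [abs_mul, abs_mul, abs_of_nonneg (hgnonneg _), abs_of_nonneg (hν0 _)]
    calc g (η x) * |F (G η)| * ν η ≤ g (η x) * M * ν η :=
          mul_le_mul_of_nonneg_right
            (mul_le_mul_of_nonneg_left (hF _) (hgnonneg _)) (hν0 η)
      _ = M * (g (η x) * ν η) := by ring
  have S2' : ∀ x : Fin d → ZMod N, Summable (fun η : Config N d => g (η x) * F η * ν η) :=
    fun x => S2 x id
  set A : (Fin d → ZMod N) → ℝ := fun x => ∑' η : Config N d, g (η x) * F η * ν η with hA
  -- change of variables consequence
  have CV' : ∀ x y : Fin d → ZMod N,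
      ∑' η : Config N d, g (η x) * F (moveCfg η x y) * ν η = φ (u x) / φ (u y) * A y := by
    intro x y
    have h := CV g φ u p hg0 hratio ν hν F x y
    rw [tsum_mul_left, tsum_mul_left] at h
    rw [div_mul_eq_mul_div, eq_div_iff (hφpos y).ne']
    linear_combination h
  -- LHS computation
  have hNne : ((N : ℝ) ^ 2) ≠ 0 := pow_ne_zero 2 (Nat.cast_ne_zero.mpr (NeZero.ne N))
  have hLHS : ∑' η : Config N d, LZR N d g F η * ν η
      = ∑ x : Fin d → ZMod N, ∑ i : Fin d,
          ((φ (u x) / φ (u (x + e i)) * A (x + e i) - A x)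
            + (φ (u x) / φ (u (x - e i)) * A (x - e i) - A x)) := by
    have hconv : ∀ η : Config N d, LZR N d g F η * ν η
        = ∑ x : Fin d → ZMod N, ∑ i : Fin d,
            ((g (η x) * F (moveCfg η x (x + e i)) * ν η - g (η x) * F η * ν η)
              + (g (η x) * F (moveCfg η x (x - e i)) * ν η - g (η x) * F η * ν η)) := by
      intro η
      rw [LZR, Finset.sum_mul]
      refine Finset.sum_congr rfl fun x _ => ?_
      rw [Finset.sum_mul]
      exact Finset.sum_congr rfl fun i _ => by ring
    have sum1 : ∀ (x : Fin d → ZMod N) (i : Fin d), Summable (fun η : Config N d =>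
        g (η x) * F (moveCfg η x (x + e i)) * ν η - g (η x) * F η * ν η
          + (g (η x) * F (moveCfg η x (x - e i)) * ν η - g (η x) * F η * ν η)) :=
      fun x i => ((S2 x (fun η => moveCfg η x (x + e i))).sub (S2' x)).add
        ((S2 x (fun η => moveCfg η x (x - e i))).sub (S2' x))
    rw [tsum_congr hconv]
    have step1 : (∑' η : Config N d, ∑ x : Fin d → ZMod N, ∑ i : Fin d,
        (g (η x) * F (moveCfg η x (x + e i)) * ν η - g (η x) * F η * ν η
          + (g (η x) * F (moveCfg η x (x - e i)) * ν η - g (η x) * F η * ν η)))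
        = ∑ x : Fin d → ZMod N, ∑ i : Fin d, ∑' η : Config N d,
          (g (η x) * F (moveCfg η x (x + e i)) * ν η - g (η x) * F η * ν η
            + (g (η x) * F (moveCfg η x (x - e i)) * ν η - g (η x) * F η * ν η)) := by
      rw [Summable.tsum_finsetSum (fun x _ => summable_sum (fun i _ => sum1 x i))]
      exact Finset.sum_congr rfl fun x _ => Summable.tsum_finsetSum (fun i _ => sum1 x i)
    rw [step1]
    refine Finset.sum_congr rfl fun x _ => Finset.sum_congr rfl fun i _ => ?_
    rw [Summable.tsum_add ((S2 x (fun η => moveCfg η x (x + e i))).sub (S2' x))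
        ((S2 x (fun η => moveCfg η x (x - e i))).sub (S2' x)),
      Summable.tsum_sub (S2 x (fun η => moveCfg η x (x + e i))) (S2' x),
      Summable.tsum_sub (S2 x (fun η => moveCfg η x (x - e i))) (S2' x)]
    rw [CV' x (x + e i), CV' x (x - e i)]
  -- RHS computation
  have hzero : ∑ x : Fin d → ZMod N,
      discLap N d (fun y => φ (u y)) x / ((N : ℝ) ^ 2 * φ (u x)) * φ (u x) = 0 := by
    have h1 : ∀ x : Fin d → ZMod N,
        discLap N d (fun y => φ (u y)) x / ((N : ℝ) ^ 2 * φ (u x)) * φ (u x)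
          = discLap N d (fun y => φ (u y)) x / (N : ℝ) ^ 2 := by
      intro x
      have hx := (hφpos x).ne'
      field_simp
    rw [Finset.sum_congr rfl fun x _ => h1 x, ← Finset.sum_div]
    have h2 : ∑ x : Fin d → ZMod N, discLap N d (fun y => φ (u y)) x = 0 := by
      simp only [discLap, ← Finset.mul_sum]
      rw [Finset.sum_comm]
      have h3 : ∀ i : Fin d, ∑ x : Fin d → ZMod N,
          (φ (u (x + unitVec N d i)) + φ (u (x - unitVec N d i)) - 2 * φ (u x)) = 0 := by
        intro i
        rw [Finset.sum_sub_distrib, Finset.sum_add_distrib]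
        rw [Fintype.sum_equiv (Equiv.addRight (unitVec N d i))
          (fun x => φ (u (x + unitVec N d i))) (fun x => φ (u x)) (fun x => rfl)]
        rw [Fintype.sum_equiv (Equiv.subRight (unitVec N d i))
          (fun x => φ (u (x - unitVec N d i))) (fun x => φ (u x)) (fun x => rfl)]
        rw [sub_eq_zero, ← Finset.sum_add_distrib]
        exact Finset.sum_congr rfl fun x _ => (two_mul _).symm
      rw [Finset.sum_congr rfl fun i _ => h3 i]
      simp
    rw [h2, zero_div]
  have hRHS : (∑' η : Config N d,
        (∑ x : Fin d → ZMod N,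
          discLap N d (fun y => φ (u y)) x / ((N : ℝ) ^ 2 * φ (u x)) *
            (g (η x) - φ (u x))) * F η * ν η)
      = ∑ x : Fin d → ZMod N,
          discLap N d (fun y => φ (u y)) x / ((N : ℝ) ^ 2 * φ (u x)) * A x := by
    have hconv : ∀ η : Config N d,
        (∑ x : Fin d → ZMod N,
          discLap N d (fun y => φ (u y)) x / ((N : ℝ) ^ 2 * φ (u x)) *
            (g (η x) - φ (u x))) * F η * ν η
        = ∑ x : Fin d → ZMod N,
            discLap N d (fun y => φ (u y)) x / ((N : ℝ) ^ 2 * φ (u x)) *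
              (g (η x) * F η * ν η) := by
      intro η
      have hsplit : (∑ x : Fin d → ZMod N,
          discLap N d (fun y => φ (u y)) x / ((N : ℝ) ^ 2 * φ (u x)) * (g (η x) - φ (u x)))
          = ∑ x : Fin d → ZMod N,
            discLap N d (fun y => φ (u y)) x / ((N : ℝ) ^ 2 * φ (u x)) * g (η x) := by
        rw [Finset.sum_congr rfl fun x _ => mul_sub
            (discLap N d (fun y => φ (u y)) x / ((N : ℝ) ^ 2 * φ (u x))) (g (η x)) (φ (u x)),
          Finset.sum_sub_distrib, hzero, sub_zero]
      rw [hsplit, Finset.sum_mul, Finset.sum_mul]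
      exact Finset.sum_congr rfl fun x _ => by ring
    rw [tsum_congr hconv]
    rw [Summable.tsum_finsetSum (fun x _ => (S2' x).mul_left _)]
    exact Finset.sum_congr rfl fun x _ => tsum_mul_left
  rw [hLHS, hRHS]
  -- final algebraic identity on the torus
  have hc : ∀ x : Fin d → ZMod N,
      discLap N d (fun y => φ (u y)) x / ((N : ℝ) ^ 2 * φ (u x)) * A x
        = ∑ i : Fin d,
            (φ (u (x + e i)) + φ (u (x - e i)) - 2 * φ (u x)) / φ (u x) * A x := by
    intro x
    rw [discLap, mul_div_mul_left _ _ hNne, Finset.sum_div, Finset.sum_mul]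
  rw [Finset.sum_congr rfl fun x _ => hc x]
  refine (Finset.sum_comm).trans (Eq.trans ?_ (Finset.sum_comm))
  refine Finset.sum_congr rfl fun i _ => ?_
  have h1 : ∑ x : Fin d → ZMod N, φ (u x) / φ (u (x + e i)) * A (x + e i)
      = ∑ x : Fin d → ZMod N, φ (u (x - e i)) / φ (u x) * A x := by
    refine Fintype.sum_equiv (Equiv.addRight (e i)) _ _ (fun x => ?_)
    simp
  have h2 : ∑ x : Fin d → ZMod N, φ (u x) / φ (u (x - e i)) * A (x - e i)
      = ∑ x : Fin d → ZMod N, φ (u (x + e i)) / φ (u x) * A x := by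
    refine Fintype.sum_equiv (Equiv.subRight (e i)) _ _ (fun x => ?_)
    simp
  rw [Finset.sum_add_distrib, Finset.sum_sub_distrib, Finset.sum_sub_distrib, h1, h2]
  rw [show (∑ x : Fin d → ZMod N,
      (φ (u (x + e i)) + φ (u (x - e i)) - 2 * φ (u x)) / φ (u x) * A x)
      = ∑ x : Fin d → ZMod N,
        ((φ (u (x - e i)) / φ (u x) * A x - A x) + (φ (u (x + e i)) / φ (u x) * A x - A x))
    from Finset.sum_congr rfl fun x _ => by
      have hx := (hφpos x).ne'
      field_simp
      ring]
  rw [Finset.sum_add_distrib, Finset.sum_sub_distrib, Finset.sum_sub_distrib]
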